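/- Suppose the set of optimal thresholds Argmax(E) = { s ∈ {1,...,M+1} : E(s) ≥ E(t) for all t ∈ {1,...,M+1} } contains at least three elements. Then there exists m ∈ {1,...,M} such that U(x) = 0 for every x with m ≤ x ≤ M, such that Σ_{x=1}^{m−1} U(x) = G/p + P − B, and moreover the maximum value of E over {1,...,M+1} equals 0 (so the always-inactive policy is optimal). Consequently, if no such m exists, the number of optimal thresholds is at most two. -/

import Mathlib

open Finset

/-- Expected average reward `E(s)` of the threshold-`s` policy, for `1 ≤ s ≤ M`;
`E(M+1) = 0` corresponds to the always-inactive policy. -/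
noncomputable def Ereward (M : ℕ) (p G P B : ℝ) (U : ℕ → ℝ) (s : ℕ) : ℝ :=
  if s = M + 1 then 0
  else ((s : ℝ) + (1 - p) / p)⁻¹ *
    ((∑ x ∈ Finset.Icc 1 (s - 1), U x)
      + (∑ i ∈ Finset.range (M - s), U (s + i) * (1 - p) ^ i)
      - G / p - P + B)

namespace ThreeOpt

/-- geometric tail sum -/
noncomputable def T (M : ℕ) (p : ℝ) (U : ℕ → ℝ) (s : ℕ) : ℝ :=
  ∑ i ∈ Finset.range (M - s), U (s + i) * (1 - p) ^ i

noncomputable def A (U : ℕ → ℝ) (s : ℕ) : ℝ := ∑ x ∈ Finset.Icc 1 (s - 1), U x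

lemma Trec {M : ℕ} {p : ℝ} {U : ℕ → ℝ} {s : ℕ} (h : s < M) :
    T M p U s = U s + (1 - p) * T M p U (s + 1) := by
  unfold T
  have h1 : M - s = (M - (s + 1)) + 1 := by omega
  rw [h1, Finset.sum_range_succ', Finset.mul_sum]
  simp only [add_zero, pow_zero, mul_one]
  rw [add_comm]
  congr 1
  refine Finset.sum_congr rfl fun i _ => ?_
  have hh : s + (i + 1) = s + 1 + i := by omega
  rw [hh]; ring

lemma Arec {U : ℕ → ℝ} {s : ℕ} (h : 1 ≤ s) : A U (s + 1) = A U s + U s := by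
  unfold A
  have h1 : s + 1 - 1 = (s - 1) + 1 := by omega
  rw [h1, Finset.sum_Icc_succ_top (by omega : 1 ≤ (s - 1) + 1)]
  rw [show s - 1 + 1 = s by omega]

section

variable {M : ℕ} {p G P B : ℝ} {U : ℕ → ℝ}

lemma Unonneg (hU : ∀ ⦃x y : ℕ⦄, 1 ≤ x → x ≤ y → y ≤ M → U y ≤ U x)
    (hUM : U M = 0) {x : ℕ} (hx1 : 1 ≤ x) (hx2 : x ≤ M) : 0 ≤ U x := by
  have := hU hx1 hx2 le_rfl
  rw [hUM] at this; linarith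

lemma Tnonneg (hp1 : p < 1)
    (hU : ∀ ⦃x y : ℕ⦄, 1 ≤ x → x ≤ y → y ≤ M → U y ≤ U x)
    (hUM : U M = 0) {s : ℕ} (hs : 1 ≤ s) : 0 ≤ T M p U s := by
  apply Finset.sum_nonneg
  intro i hi
  rw [Finset.mem_range] at hi
  have h1 : 1 ≤ s + i := by omega
  have h2 : s + i ≤ M := by omega
  exact mul_nonneg (Unonneg hU hUM h1 h2) (pow_nonneg (by linarith) i)

lemma Tgeom (hp : 0 < p) (hp1 : p < 1)
    (hU : ∀ ⦃x y : ℕ⦄, 1 ≤ x → x ≤ y → y ≤ M → U y ≤ U x)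
    {s : ℕ} (hs : 1 ≤ s) (hsM : s ≤ M) :
    p * T M p U s ≤ U s * (1 - (1 - p) ^ (M - s)) := by
  have hsum : T M p U s ≤ U s * ∑ i ∈ Finset.range (M - s), (1 - p) ^ i := by
    rw [Finset.mul_sum]
    apply Finset.sum_le_sum
    intro i hi
    rw [Finset.mem_range] at hi
    have h1 : U (s + i) ≤ U s := hU hs (by omega) (by omega)
    exact mul_le_mul_of_nonneg_right h1 (pow_nonneg (by linarith) i)
  have hg : p * ∑ i ∈ Finset.range (M - s), (1 - p) ^ i
      = 1 - (1 - p) ^ (M - s) := by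
    have hgm := geom_sum_mul (1 - p) (M - s)
    linear_combination -hgm
  have : p * T M p U s ≤ p * (U s * ∑ i ∈ Finset.range (M - s), (1 - p) ^ i) :=
    mul_le_mul_of_nonneg_left hsum (le_of_lt hp)
  calc p * T M p U s ≤ p * (U s * ∑ i ∈ Finset.range (M - s), (1 - p) ^ i) := this
    _ = U s * (p * ∑ i ∈ Finset.range (M - s), (1 - p) ^ i) := by ring
    _ = U s * (1 - (1 - p) ^ (M - s)) := by rw [hg]

lemma Tmono_succ (hp : 0 < p) (hp1 : p < 1)
    (hU : ∀ ⦃x y : ℕ⦄, 1 ≤ x → x ≤ y → y ≤ M → U y ≤ U x)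
    (hUM : U M = 0) {s : ℕ} (hs : 1 ≤ s) :
    T M p U (s + 1) ≤ T M p U s := by
  by_cases h : s < M
  · rw [Trec h]
    have hg := Tgeom hp hp1 hU (by omega : 1 ≤ s + 1) (by omega : s + 1 ≤ M)
    have hx : (0:ℝ) ≤ (1 - p) ^ (M - (s + 1)) := pow_nonneg (by linarith) _
    have hU1 : 0 ≤ U (s + 1) := Unonneg hU hUM (by omega) (by omega)
    have hU2 : U (s + 1) ≤ U s := hU hs (by omega) (by omega)
    nlinarith
  · have h1 : M - s = 0 := by omega
    have h2 : M - (s + 1) = 0 := by omega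
    unfold T
    rw [h1, h2]
    simp

lemma Tmono (hp : 0 < p) (hp1 : p < 1)
    (hU : ∀ ⦃x y : ℕ⦄, 1 ≤ x → x ≤ y → y ≤ M → U y ≤ U x)
    (hUM : U M = 0) {s r : ℕ} (hs : 1 ≤ s) (hsr : s ≤ r) :
    T M p U r ≤ T M p U s := by
  induction r, hsr using Nat.le_induction with
  | base => exact le_rfl
  | succ n hn ih => exact le_trans (Tmono_succ hp hp1 hU hUM (by omega)) ih

lemma cpos (hp : 0 < p) (hp1 : p < 1) {s : ℕ} (hs : 1 ≤ s) :
    (0:ℝ) < (s : ℝ) + (1 - p) / p := by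
  have h1 : (1:ℝ) ≤ (s:ℝ) := by exact_mod_cast hs
  have h2 : 0 < (1 - p) / p := div_pos (by linarith) hp
  linarith

lemma cE (hp : 0 < p) (hp1 : p < 1) {s : ℕ} (h1 : 1 ≤ s) (h2 : s ≤ M) :
    ((s : ℝ) + (1 - p) / p) * Ereward M p G P B U s
      = A U s + T M p U s - G / p - P + B := by
  have hne : s ≠ M + 1 := by omega
  rw [Ereward, if_neg hne, ← mul_assoc, mul_inv_cancel₀ (ne_of_gt (cpos hp hp1 h1)), one_mul]
  unfold A T
  ring

lemma step (hp : 0 < p) (hp1 : p < 1) {s : ℕ} (h1 : 1 ≤ s) (h2 : s + 1 ≤ M) :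
    ((s : ℝ) + (1 - p) / p + 1) *
        (Ereward M p G P B U (s + 1) - Ereward M p G P B U s)
      = p * T M p U (s + 1) - Ereward M p G P B U s := by
  have e1 := cE (M := M) (G := G) (P := P) (B := B) (U := U) hp hp1 h1 (by omega : s ≤ M)
  have e2 := cE (M := M) (G := G) (P := P) (B := B) (U := U) hp hp1
    (by omega : 1 ≤ s + 1) h2
  push_cast at e2
  rw [Arec h1] at e2
  rw [Trec (by omega : s < M)] at e1
  have hc := cpos hp hp1 h1 (p := p)
  linear_combination e2 - e1

end

lemma exists_three {S : Set ℕ} (h : 3 ≤ S.ncard) :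
    ∃ a b c, a ∈ S ∧ b ∈ S ∧ c ∈ S ∧ a < b ∧ b < c := by
  have hfin : S.Finite := by
    by_contra hf
    rw [Set.Infinite.ncard hf] at h
    omega
  have hcard : 2 < hfin.toFinset.card := by
    rw [← Set.ncard_eq_toFinset_card S hfin]
    omega
  rw [Finset.two_lt_card_iff] at hcard
  obtain ⟨a, b, c, ha, hb, hc, hab, hac, hbc⟩ := hcard
  rw [Set.Finite.mem_toFinset] at ha hb hc
  rcases Nat.lt_trichotomy a b with h1 | h1 | h1
  · rcases Nat.lt_trichotomy b c with h2 | h2 | h2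
    · exact ⟨a, b, c, ha, hb, hc, h1, h2⟩
    · omega
    · rcases Nat.lt_trichotomy a c with h3 | h3 | h3
      · exact ⟨a, c, b, ha, hc, hb, h3, h2⟩
      · omega
      · exact ⟨c, a, b, hc, ha, hb, h3, h1⟩
  · omega
  · rcases Nat.lt_trichotomy a c with h2 | h2 | h2
    · exact ⟨b, a, c, hb, ha, hc, h1, h2⟩
    · omega
    · rcases Nat.lt_trichotomy b c with h3 | h3 | h3
      · exact ⟨b, c, a, hb, hc, ha, h3, h2⟩
      · omega
      · exact ⟨c, b, a, hc, hb, ha, h3, h1⟩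

end ThreeOpt

set_option maxHeartbeats 1000000 in
theorem three_optimal_thresholds (M : ℕ) (p G P B : ℝ) (U : ℕ → ℝ)
    (hM : 2 ≤ M) (hp : 0 < p) (hp1 : p < 1)
    (hU : ∀ ⦃x y : ℕ⦄, 1 ≤ x → x ≤ y → y ≤ M → U y ≤ U x)
    (hUM : U M = 0)
    (hcard : 3 ≤ {s : ℕ | s ∈ Set.Icc 1 (M + 1) ∧
      ∀ t ∈ Set.Icc 1 (M + 1),
        Ereward M p G P B U t ≤ Ereward M p G P B U s}.ncard) :
    ∃ m : ℕ, 1 ≤ m ∧ m ≤ M ∧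
      (∀ x : ℕ, m ≤ x → x ≤ M → U x = 0) ∧
      (∑ x ∈ Finset.Icc 1 (m - 1), U x) = G / p + P - B ∧
      (∀ t ∈ Set.Icc 1 (M + 1), Ereward M p G P B U t ≤ 0) := by
  classical
  set E := Ereward M p G P B U with hE
  set T := ThreeOpt.T M p U with hT
  obtain ⟨s, t, u, hsS, htS, huS, hst, htu⟩ := ThreeOpt.exists_three hcard
  obtain ⟨⟨hs1, hsM1⟩, hsmax⟩ := hsS
  obtain ⟨⟨ht1, htM1⟩, htmax⟩ := htS
  obtain ⟨⟨hu1, huM1⟩, humax⟩ := huS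
  set V := E s with hV
  have hEt : E t = V :=
    le_antisymm (hsmax t ⟨ht1, htM1⟩) (htmax s ⟨hs1, hsM1⟩)
  have hEu : E u = V :=
    le_antisymm (hsmax u ⟨hu1, huM1⟩) (humax s ⟨hs1, hsM1⟩)
  have htM : t ≤ M := by omega
  have hsM : s + 1 ≤ M := by omega
  have hEtop : E (M + 1) = 0 := by simp [hE, Ereward]
  have hVnonneg : 0 ≤ V := by
    have := hsmax (M + 1) ⟨by omega, le_rfl⟩
    rw [hEtop] at this; linarith
  -- key one-step lemmas
  have keyA : ∀ r : ℕ, 1 ≤ r → r + 1 ≤ M → E r = V → p * T (r + 1) ≤ V := by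
    intro r h1 h2 hEr
    have hst := ThreeOpt.step (M := M) (G := G) (P := P) (B := B) (U := U) hp hp1 h1 h2
    have hc := ThreeOpt.cpos hp hp1 h1 (p := p)
    have hle : E (r + 1) ≤ V := hsmax (r + 1) ⟨by omega, by omega⟩
    rw [← hE, ← hT, hEr] at hst
    nlinarith
  have keyB : ∀ r : ℕ, 1 ≤ r → r + 1 ≤ M → E (r + 1) = V → p * T (r + 1) ≤ V →
      E r = V ∧ p * T (r + 1) = V := by
    intro r h1 h2 hEr1 hTle
    have hst := ThreeOpt.step (M := M) (G := G) (P := P) (B := B) (U := U) hp hp1 h1 h2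
    have hc := ThreeOpt.cpos hp hp1 h1 (p := p)
    have hle : E r ≤ V := hsmax r ⟨by omega, by omega⟩
    rw [← hE, ← hT, hEr1] at hst
    have hEr : E r = V := by
      have hge : V ≤ E r := by nlinarith
      linarith
    rw [hEr] at hst
    exact ⟨hEr, by linarith [hst]⟩
  have hTs1le : p * T (s + 1) ≤ V := keyA s hs1 hsM rfl
  -- prove V = 0
  have hV0 : V = 0 := by
    rcases eq_or_lt_of_le huM1 with hu' | hu'
    · rw [← hEu, hu', hEtop]
    · -- u ≤ M
      have huM : u ≤ M := by omega
      -- downward induction from u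
      have down : ∀ k : ℕ, k ≤ u - s →
          E (u - k) = V ∧ (1 ≤ k → p * T (u - k + 1) = V) := by
        intro k
        induction k with
        | zero =>
          intro _
          refine ⟨?_, by omega⟩
          simpa using hEu
        | succ n ih =>
          intro hn
          obtain ⟨hEn, _⟩ := ih (by omega)
          have hr1 : u - n = (u - (n + 1)) + 1 := by omega
          rw [hr1] at hEn
          have hrs : s ≤ u - (n + 1) := by omega
          have hTle : p * T (u - (n + 1) + 1) ≤ V := by
            have hmono : T (u - (n + 1) + 1) ≤ T (s + 1) :=
              ThreeOpt.Tmono hp hp1 hU hUM (by omega) (by omega)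
            nlinarith
          obtain ⟨hA, hB⟩ := keyB (u - (n + 1)) (by omega) (by omega) hEn hTle
          exact ⟨hA, fun _ => hB⟩
      have hTu : p * T u = V := by
        have := (down 1 (by omega)).2 (le_rfl)
        rwa [show u - 1 + 1 = u by omega] at this
      have hTsp1 : p * T (s + 1) = V := by
        have := (down (u - s) (le_rfl)).2 (by omega)
        rwa [show u - (u - s) = s by omega] at this
      have hTsp2 : p * T (s + 2) = V := by
        have := (down (u - s - 1) (by omega)).2 (by omega)
        rwa [show u - (u - s - 1) = s + 1 by omega,
          show s + 1 + 1 = s + 2 by omega] at this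
      -- U (s+1) = V
      have hrec : T (s + 1) = U (s + 1) + (1 - p) * T (s + 2) := by
        rw [hT]
        exact ThreeOpt.Trec (by omega : s + 1 < M)
      have hUs1 : U (s + 1) = V := by
        have hpne : p ≠ 0 := ne_of_gt hp
        have : p * T (s + 1) = p * U (s + 1) + (1 - p) * (p * T (s + 2)) := by
          rw [hrec]; ring
        rw [hTsp1, hTsp2] at this
        have h2 : p * U (s + 1) = p * V := by linarith
        exact mul_left_cancel₀ hpne h2
      -- contradiction bound at u
      have hgeo := ThreeOpt.Tgeom (M := M) (U := U) hp hp1 hU hu1 huM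
      have hUu : U u ≤ V := by
        rw [← hUs1]; exact hU (by omega) (by omega) huM
      have hx : (0:ℝ) < (1 - p) ^ (M - u) := pow_pos (by linarith) _
      have hx1 : (1 - p) ^ (M - u) ≤ 1 := pow_le_one₀ (by linarith) (by linarith)
      rw [← hT] at hgeo
      have h1 : U u * (1 - (1 - p) ^ (M - u)) ≤ V * (1 - (1 - p) ^ (M - u)) :=
        mul_le_mul_of_nonneg_right hUu (by linarith)
      have h2 : V ≤ V * (1 - (1 - p) ^ (M - u)) := by
        calc V = p * T u := hTu.symm
          _ ≤ U u * (1 - (1 - p) ^ (M - u)) := hgeo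
          _ ≤ V * (1 - (1 - p) ^ (M - u)) := h1
      have h3 : V * (1 - p) ^ (M - u) ≤ 0 := by nlinarith
      have h4 : 0 ≤ V * (1 - p) ^ (M - u) := mul_nonneg hVnonneg (le_of_lt hx)
      have h5 : V * (1 - p) ^ (M - u) = 0 := le_antisymm h3 h4
      rcases mul_eq_zero.mp h5 with h | h
      · exact h
      · exact absurd h (ne_of_gt hx)
  -- now conclusions with m = s + 1
  have hTs10 : T (s + 1) = 0 := by
    have h1 : 0 ≤ T (s + 1) := ThreeOpt.Tnonneg hp1 hU hUM (by omega)
    rw [hV0] at hTs1le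
    nlinarith
  refine ⟨s + 1, by omega, by omega, ?_, ?_, ?_⟩
  · -- U x = 0 for s+1 ≤ x ≤ M
    intro x hx1 hx2
    rcases eq_or_lt_of_le hx2 with hxM | hxM
    · rw [hxM, hUM]
    · -- x < M, so x = s+1+i with i < M - (s+1)
      have hterm : ∀ i ∈ Finset.range (M - (s + 1)),
          (0:ℝ) ≤ U (s + 1 + i) * (1 - p) ^ i := by
        intro i hi
        rw [Finset.mem_range] at hi
        exact mul_nonneg (ThreeOpt.Unonneg hU hUM (by omega) (by omega))
          (pow_nonneg (by linarith) i)
      have hall := (Finset.sum_eq_zero_iff_of_nonneg hterm).mp hTs10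
      have hx := hall (x - (s + 1)) (by rw [Finset.mem_range]; omega)
      rw [show s + 1 + (x - (s + 1)) = x by omega] at hx
      have hpow : (0:ℝ) < (1 - p) ^ (x - (s + 1)) := pow_pos (by linarith) _
      rcases mul_eq_zero.mp hx with h | h
      · exact h
      · exact absurd h (ne_of_gt hpow)
  · -- sum formula
    have hcEs := ThreeOpt.cE (M := M) (G := G) (P := P) (B := B) (U := U)
      hp hp1 hs1 (by omega : s ≤ M)
    rw [← hE, ← hV] at hcEs
    rw [hV0, mul_zero] at hcEs
    have hrec : ThreeOpt.T M p U s = U s + (1 - p) * T (s + 1) := by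
      rw [hT]; exact ThreeOpt.Trec (by omega : s < M)
    rw [hrec, hTs10] at hcEs
    have hAs : (∑ x ∈ Finset.Icc 1 (s + 1 - 1), U x) = ThreeOpt.A U s + U s := by
      have := ThreeOpt.Arec (U := U) hs1
      unfold ThreeOpt.A at this ⊢
      exact this
    rw [hAs]
    linarith
  · intro r hr
    have := hsmax r hr
    rw [hV0] at this
    exact this
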